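/- Let Ψ = P[A | ℋ] be a version of the conditional probability with values in [0,1] and assume there is a number q ∈ [0,1] with P[Ψ ≤ q] = 1 − P[A]. Then the refinement loss E[Ψ(1−Ψ)] satisfies the bounds 1 − corr[1_A, 1_{Ψ > q}] ≤ E[Ψ(1−Ψ)] / (P[A](1−P[A])) ≤ 1 − corr[1_A, 1_{Ψ > q}]², where corr[X, Y] = cov[X, Y] / (√var[X] · √var[Y]) denotes the Pearson correlation coefficient. -/

import Mathlib

open MeasureTheory

/-- Expectation of a real random variable w.r.t. `P`. -/
noncomputable def pMean {Ω : Type*} {mΩ : MeasurableSpace Ω} (P : Measure Ω) (X : Ω → ℝ) : ℝ :=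
  ∫ ω, X ω ∂P

/-- Covariance `cov[X, Y] = E[(X − E X)(Y − E Y)]`. -/
noncomputable def pCov {Ω : Type*} {mΩ : MeasurableSpace Ω} (P : Measure Ω) (X Y : Ω → ℝ) : ℝ :=
  ∫ ω, (X ω - pMean P X) * (Y ω - pMean P Y) ∂P

/-- Pearson correlation `corr[X, Y] = cov[X, Y] / (√var[X] · √var[Y])`. -/
noncomputable def pCorr {Ω : Type*} {mΩ : MeasurableSpace Ω} (P : Measure Ω) (X Y : Ω → ℝ) : ℝ :=
  pCov P X Y / (Real.sqrt (pCov P X X) * Real.sqrt (pCov P Y Y))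

lemma integrable_of_bdd' {Ω : Type*} {m : MeasurableSpace Ω} {P : Measure Ω}
    [IsProbabilityMeasure P] {X : Ω → ℝ} (hX : Measurable X) {C : ℝ}
    (hb : ∀ ω, |X ω| ≤ C) : Integrable X P :=
  (integrable_const C).mono' hX.aestronglyMeasurable (ae_of_all _ (by simpa using hb))

lemma integral_sub_mul_sub' {Ω : Type*} {m : MeasurableSpace Ω} {P : Measure Ω}
    [IsProbabilityMeasure P] {X Y : Ω → ℝ} (hX : Measurable X) (hY : Measurable Y)
    (hXb : ∀ ω, |X ω| ≤ 1) (hYb : ∀ ω, |Y ω| ≤ 1) (a b : ℝ) :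
    ∫ ω, (X ω - a) * (Y ω - b) ∂P
      = (∫ ω, X ω * Y ω ∂P) - b * (∫ ω, X ω ∂P) - a * (∫ ω, Y ω ∂P) + a * b := by
  have hXi : Integrable X P := integrable_of_bdd' hX hXb
  have hYi : Integrable Y P := integrable_of_bdd' hY hYb
  have hXYi : Integrable (fun ω => X ω * Y ω) P := by
    refine integrable_of_bdd' (hX.mul hY) (C := 1) (fun ω => ?_)
    rw [abs_mul]
    calc |X ω| * |Y ω| ≤ 1 * 1 := mul_le_mul (hXb ω) (hYb ω) (abs_nonneg _) zero_le_one
    _ = 1 := by ring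
  have hsum : Integrable (fun ω => b * X ω + a * Y ω) P := by
    exact (hXi.const_mul b).add (hYi.const_mul a)
  have hsub : Integrable (fun ω => X ω * Y ω - (b * X ω + a * Y ω)) P := by
    exact hXYi.sub hsum
  have h1 : (fun ω => (X ω - a) * (Y ω - b))
      = fun ω => (X ω * Y ω - (b * X ω + a * Y ω)) + a * b := by
    funext ω; ring
  rw [h1, integral_add hsub (integrable_const _), integral_sub hXYi hsum,
    integral_add (hXi.const_mul b) (hYi.const_mul a),
    integral_const_mul, integral_const_mul, integral_const]
  simp; ring

lemma cs_int' {Ω : Type*} {m : MeasurableSpace Ω} {P : Measure Ω}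
    [IsProbabilityMeasure P] {u v : Ω → ℝ} (hu : Measurable u) (hv : Measurable v)
    {C : ℝ} (hub : ∀ ω, |u ω| ≤ C) (hvb : ∀ ω, |v ω| ≤ C) :
    (∫ ω, u ω * v ω ∂P) ^ 2 ≤ (∫ ω, u ω * u ω ∂P) * (∫ ω, v ω * v ω ∂P) := by
  have hmul : ∀ {x y : Ω → ℝ}, Measurable x → Measurable y → (∀ ω, |x ω| ≤ C) →
      (∀ ω, |y ω| ≤ C) → Integrable (fun ω => x ω * y ω) P := by
    intro x y hx hy hbx hby
    refine integrable_of_bdd' (hx.mul hy) (C := C * C) (fun ω => ?_)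
    rw [abs_mul]
    exact mul_le_mul (hbx ω) (hby ω) (abs_nonneg _) ((abs_nonneg _).trans (hbx ω))
  have huu := hmul hu hu hub hub
  have huv := hmul hu hv hub hvb
  have hvv := hmul hv hv hvb hvb
  set b := ∫ ω, u ω * u ω ∂P with hb
  set a := ∫ ω, u ω * v ω ∂P with ha
  set c := ∫ ω, v ω * v ω ∂P with hc
  have key : ∀ t : ℝ, 0 ≤ b * (t * t) + (2 * a) * t + c := by
    intro t
    have h1 : ∀ ω, (t * u ω + v ω) * (t * u ω + v ω)
        = ((t * t) * (u ω * u ω) + (2 * t) * (u ω * v ω)) + v ω * v ω := by intro ω; ring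
    have h2 : (0:ℝ) ≤ ∫ ω, (t * u ω + v ω) * (t * u ω + v ω) ∂P :=
      integral_nonneg (fun ω => mul_self_nonneg _)
    have i1 : Integrable (fun ω => (t * t) * (u ω * u ω) + (2 * t) * (u ω * v ω)) P := by
      exact (huu.const_mul _).add (huv.const_mul _)
    rw [integral_congr_ae (ae_of_all _ h1), integral_add i1 hvv,
      integral_add (huu.const_mul _) (huv.const_mul _),
      integral_const_mul, integral_const_mul] at h2
    nlinarith [h2]
  have hd := discrim_le_zero key
  rw [discrim] at hd
  nlinarith [hd]

/-- **Proposition 8 (bounds for the refinement loss)**: if `Ψ = P[A | ℋ]` (a `[0,1]`-valued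
version) and `q` satisfies `P[Ψ ≤ q] = 1 − P[A]`, then
`1 − corr[1_A, 1_{Ψ > q}] ≤ E[Ψ (1 − Ψ)] / (P[A](1 − P[A])) ≤ 1 − corr[1_A, 1_{Ψ > q}]²`. -/
theorem refinement_loss_correlation_bounds
    {Ω : Type*} {mΩ : MeasurableSpace Ω} {P : Measure Ω} [IsProbabilityMeasure P]
    {A : Set Ω} (hA : MeasurableSet A) (hA0 : 0 < P A) (hA1 : P A < 1)
    {mH : MeasurableSpace Ω} (hH : mH ≤ mΩ) (hAH : ¬ MeasurableSet[mH] A)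
    {Ψ : Ω → ℝ} (hΨm : Measurable[mH] Ψ) (hΨ01 : ∀ ω, Ψ ω ∈ Set.Icc (0 : ℝ) 1)
    (hΨ : Ψ =ᵐ[P] P[A.indicator (fun _ => (1 : ℝ)) | mH])
    {q : ℝ} (hq01 : q ∈ Set.Icc (0 : ℝ) 1)
    (hq : (P {ω | Ψ ω ≤ q}).toReal = 1 - (P A).toReal) :
    1 - pCorr P (A.indicator (fun _ => (1 : ℝ)))
          (Set.indicator {ω | Ψ ω > q} (fun _ => (1 : ℝ)))
        ≤ (∫ ω, Ψ ω * (1 - Ψ ω) ∂P) / ((P A).toReal * (1 - (P A).toReal))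
    ∧ (∫ ω, Ψ ω * (1 - Ψ ω) ∂P) / ((P A).toReal * (1 - (P A).toReal))
        ≤ 1 - (pCorr P (A.indicator (fun _ => (1 : ℝ)))
            (Set.indicator {ω | Ψ ω > q} (fun _ => (1 : ℝ)))) ^ 2 := by
  have hΨmeas : Measurable[mΩ] Ψ := hΨm.mono hH le_rfl
  set f := A.indicator (fun _ => (1 : ℝ)) with hf_def
  set B := {ω | Ψ ω > q} with hB_def
  set g := B.indicator (fun _ => (1 : ℝ)) with hg_def
  set p := (P A).toReal with hp_def
  -- basic numeric facts
  have hp0 : 0 < p := ENNReal.toReal_pos hA0.ne' (measure_ne_top P A)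
  have hp1 : p < 1 := by
    have := (ENNReal.toReal_lt_toReal (measure_ne_top P A) ENNReal.one_ne_top).mpr hA1
    simpa using this
  -- measurability
  have hBmH : MeasurableSet[mH] B := measurableSet_lt measurable_const hΨm
  have hBm : MeasurableSet[mΩ] B := hH _ hBmH
  have hfm : Measurable[mΩ] f := measurable_const.indicator hA
  have hgm : Measurable[mΩ] g := measurable_const.indicator hBm
  -- bounds
  have hfb : ∀ ω, |f ω| ≤ 1 := by
    intro ω; by_cases h : ω ∈ A <;> simp [hf_def, h]
  have hgb : ∀ ω, |g ω| ≤ 1 := by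
    intro ω; by_cases h : ω ∈ B <;> simp [hg_def, h]
  have hΨb : ∀ ω, |Ψ ω| ≤ 1 := by
    intro ω; rw [abs_le]; constructor
    · linarith [(hΨ01 ω).1]
    · exact (hΨ01 ω).2
  -- integrability
  have hfi : Integrable f P := integrable_of_bdd' hfm hfb
  have hgi : Integrable g P := integrable_of_bdd' hgm hgb
  have hΨi : Integrable Ψ P := integrable_of_bdd' hΨmeas hΨb
  have hΨgi : Integrable (fun ω => Ψ ω * g ω) P := by
    refine integrable_of_bdd' (hΨmeas.mul hgm) (C := 1) (fun ω => ?_)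
    rw [abs_mul]
    calc |Ψ ω| * |g ω| ≤ 1 * 1 := mul_le_mul (hΨb ω) (hgb ω) (abs_nonneg _) zero_le_one
    _ = 1 := by ring
  have hΨΨi : Integrable (fun ω => Ψ ω * Ψ ω) P := by
    refine integrable_of_bdd' (hΨmeas.mul hΨmeas) (C := 1) (fun ω => ?_)
    rw [abs_mul]
    calc |Ψ ω| * |Ψ ω| ≤ 1 * 1 := mul_le_mul (hΨb ω) (hΨb ω) (abs_nonneg _) zero_le_one
    _ = 1 := by ring
  -- F1 : ∫ f = p
  have F1 : ∫ ω, f ω ∂P = p := by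
    rw [hf_def, @integral_indicator Ω ℝ mΩ _ _ _ A P hA, @setIntegral_const Ω ℝ mΩ _ _ A P _ (1:ℝ)]; simp; rfl
  -- P B = p
  have hPB : (P B).toReal = p := by
    have h1 : P B + P Bᶜ = 1 := by
      rw [measure_add_measure_compl hBm]; simp
    have hcompl : Bᶜ = {ω | Ψ ω ≤ q} := by
      ext ω; simp [hB_def, not_lt]
    have h2 := congrArg ENNReal.toReal h1
    rw [ENNReal.toReal_add (measure_ne_top _ _) (measure_ne_top _ _), hcompl] at h2
    rw [hq] at h2
    simp at h2
    linarith
  -- F2 : ∫ g = p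
  have F2 : ∫ ω, g ω ∂P = p := by
    rw [hg_def, @integral_indicator Ω ℝ mΩ _ _ _ B P hBm, @setIntegral_const Ω ℝ mΩ _ _ B P _ (1:ℝ)]; simp; exact hPB
  -- F3 : ∫ Ψ = p
  have F3 : ∫ ω, Ψ ω ∂P = p := by
    rw [integral_congr_ae hΨ, integral_condExp hH, F1]
  -- products with indicators
  have hmulg : ∀ fn : Ω → ℝ, (fun ω => fn ω * g ω) = B.indicator fn := by
    intro fn; funext ω; by_cases h : ω ∈ B <;> simp [hg_def, h]
  -- F4 : ∫ f g = ∫ Ψ g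
  have F4 : ∫ ω, f ω * g ω ∂P = ∫ ω, Ψ ω * g ω ∂P := by
    rw [hmulg f, hmulg Ψ, @integral_indicator Ω ℝ mΩ _ _ f B P hBm, @integral_indicator Ω ℝ mΩ _ _ Ψ B P hBm]
    calc ∫ ω in B, f ω ∂P = ∫ ω in B, (P[f|mH]) ω ∂P :=
          (setIntegral_condExp hH hfi hBmH).symm
      _ = ∫ ω in B, Ψ ω ∂P := integral_congr_ae (ae_restrict_of_ae hΨ.symm)
  -- F5 : ∫ f f = p
  have F5 : ∫ ω, f ω * f ω ∂P = p := by
    have h : (fun ω => f ω * f ω) = f := by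
      funext ω; by_cases h : ω ∈ A <;> simp [hf_def, h]
    rw [h, F1]
  -- F6 : ∫ g g = p
  have F6 : ∫ ω, g ω * g ω ∂P = p := by
    have h : (fun ω => g ω * g ω) = g := by
      funext ω; by_cases h : ω ∈ B <;> simp [hg_def, h]
    rw [h, F2]
  set r := ∫ ω, Ψ ω * g ω ∂P with hr_def
  set s := ∫ ω, Ψ ω * Ψ ω ∂P with hs_def
  -- F7 : s ≤ r
  have F7 : s ≤ r := by
    have hgΨb : ∀ ω, |g ω - Ψ ω| ≤ 1 := by
      intro ω; rw [abs_le]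
      by_cases h : ω ∈ B <;> simp [hg_def, h] <;>
        [skip; skip] <;> constructor <;> linarith [(hΨ01 ω).1, (hΨ01 ω).2]
    have hpt : ∀ ω, 0 ≤ (Ψ ω - q) * ((g ω - Ψ ω) - 0) := by
      intro ω
      by_cases h : ω ∈ B
      · have h1 : q < Ψ ω := h
        have := (hΨ01 ω).2
        simp only [hg_def, Set.indicator_of_mem h, sub_zero]
        nlinarith
      · have h1 : Ψ ω ≤ q := by simpa [hB_def, not_lt] using h
        have := (hΨ01 ω).1
        simp only [hg_def, Set.indicator_of_notMem h, sub_zero]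
        nlinarith
    have hnn : (0:ℝ) ≤ ∫ ω, (Ψ ω - q) * ((g ω - Ψ ω) - 0) ∂P := integral_nonneg hpt
    have hexp := integral_sub_mul_sub' (P := P) (Y := fun ω => g ω - Ψ ω) hΨmeas (hgm.sub hΨmeas) hΨb hgΨb q 0
    have hsub : ∫ ω, g ω - Ψ ω ∂P = 0 := by
      rw [integral_sub hgi hΨi, F2, F3]; ring
    have hmulsub : ∫ ω, Ψ ω * (g ω - Ψ ω) ∂P = r - s := by
      have h : (fun ω => Ψ ω * (g ω - Ψ ω)) = fun ω => Ψ ω * g ω - Ψ ω * Ψ ω := by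
        funext ω; ring
      rw [h, integral_sub hΨgi hΨΨi]
    rw [hexp, hmulsub, hsub] at hnn
    linarith
  -- F8 : Cauchy–Schwarz
  have F8 : (r - p^2)^2 ≤ (s - p^2) * (p - p^2) := by
    have hub : ∀ ω, |Ψ ω - p| ≤ 1 := by
      intro ω; rw [abs_le]; constructor <;> [linarith [(hΨ01 ω).1]; linarith [(hΨ01 ω).2]]
    have hvb : ∀ ω, |g ω - p| ≤ 1 := by
      intro ω; rw [abs_le]
      by_cases h : ω ∈ B <;> simp [hg_def, h] <;> constructor <;> linarith
    have hcs := cs_int' (P := P) (u := fun ω => Ψ ω - p) (v := fun ω => g ω - p) (hΨmeas.sub measurable_const) (hgm.sub measurable_const) hub hvb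
    have e1 : ∫ ω, (Ψ ω - p) * (g ω - p) ∂P = r - p^2 := by
      rw [integral_sub_mul_sub' (P := P) hΨmeas hgm hΨb hgb p p, F2, F3]; ring
    have e2 : ∫ ω, (Ψ ω - p) * (Ψ ω - p) ∂P = s - p^2 := by
      rw [integral_sub_mul_sub' (P := P) hΨmeas hΨmeas hΨb hΨb p p, F3]; ring
    have e3 : ∫ ω, (g ω - p) * (g ω - p) ∂P = p - p^2 := by
      rw [integral_sub_mul_sub' (P := P) hgm hgm hgb hgb p p, F2, F6]; ring
    rw [e1, e2, e3] at hcs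
    exact hcs
  -- pCorr value
  have hcorr : pCorr P f g = (r - p^2) / (p - p^2) := by
    have hCfg : pCov P f g = r - p^2 := by
      rw [pCov, pMean, pMean, integral_sub_mul_sub' hfm hgm hfb hgb, F1, F2, F4]; ring
    have hCff : pCov P f f = p - p^2 := by
      rw [pCov, pMean, integral_sub_mul_sub' hfm hfm hfb hfb, F1, F5]; ring
    have hCgg : pCov P g g = p - p^2 := by
      rw [pCov, pMean, integral_sub_mul_sub' hgm hgm hgb hgb, F2, F6]; ring
    rw [pCorr, hCfg, hCff, hCgg, Real.mul_self_sqrt (by nlinarith)]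
  -- refinement loss value
  have hloss : ∫ ω, Ψ ω * (1 - Ψ ω) ∂P = p - s := by
    have h : (fun ω => Ψ ω * (1 - Ψ ω)) = fun ω => Ψ ω - Ψ ω * Ψ ω := by
      funext ω; ring
    rw [h, integral_sub hΨi hΨΨi, F3]
  rw [hloss, hcorr]
  clear_value p r s
  set c := p * (1 - p) with hc_def
  have hc : 0 < c := by rw [hc_def]; nlinarith only [hp0, hp1]
  have hcc : p - p^2 = c := by rw [hc_def]; ring
  rw [hcc]
  constructor
  · have e : 1 - (r - p^2) / c = (c - (r - p^2)) / c := by field_simp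
    rw [e, div_le_div_iff₀ hc hc]
    have key1 : (c - (r - p^2)) * c = (p - s) * c + (s - r) * c := by rw [← hcc]; ring
    have key2 : s * c ≤ r * c := mul_le_mul_of_nonneg_right F7 hc.le
    nlinarith only [key1, key2]
  · have e : 1 - ((r - p^2) / c)^2 = (c^2 - (r - p^2)^2) / c^2 := by
      rw [div_pow]; field_simp
    rw [e, div_le_div_iff₀ hc (pow_pos hc 2)]
    have key3 : (c^2 - (r - p^2)^2) * c
        = (p - s) * c^2 + ((s - p^2) * c * c - (r - p^2)^2 * c) := by rw [← hcc]; ring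
    have key4 : (r - p^2)^2 * c ≤ (s - p^2) * c * c := by
      have h := mul_le_mul_of_nonneg_right F8 hc.le
      calc (r - p^2)^2 * c ≤ (s - p^2) * (p - p^2) * c := h
        _ = (s - p^2) * c * c := by rw [hcc]
    nlinarith only [key3, key4]
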